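/- Let R be a commutative ring, let n and m be positive integers, and let N be an n×m matrix over R. For a tuple (ℓ_1, …, ℓ_m) of row indices of N, let ν_{ℓ_1, …, ℓ_m} denote the determinant of the m×m matrix whose t-th row is row ℓ_t of N. Then for any tuples (i_1, …, i_{m−1}) and (j_1, …, j_{m+1}) of row indices of N, the following Plücker relation holds: ∑_{a=1}^{m+1} (−1)^a · ν_{i_1, …, i_{m−1}, j_a} · ν_{j_1, …, j_{a−1}, j_{a+1}, …, j_{m+1}} = 0. -/

import Mathlib

/-- Plücker relations: for an `n × (m+1)` matrix `N` over a commutative ring,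
row tuples `i = (i_1,…,i_m)` and `j = (j_1,…,j_{m+2})` (so the minors below are
`(m+1) × (m+1)`), one has
`∑_{a=1}^{m+2} (−1)^a ν_{i_1,…,i_m,j_a} ν_{j_1,…,ĵ_a,…,j_{m+2}} = 0`,
where `ν` of a list of `m+1` rows is the determinant of the square matrix formed by those
rows of `N` in the listed order. -/
theorem plucker_relation (R : Type*) [CommRing R] (n m : ℕ)
    (N : Matrix (Fin n) (Fin (m + 1)) R)
    (i : Fin m → Fin n) (j : Fin (m + 2) → Fin n) :
    ∑ a : Fin (m + 2),
        (-1 : R) ^ (a.1 + 1) *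
          Matrix.det (Matrix.of fun t b => N ((Fin.snoc i (j a) : Fin (m + 1) → Fin n) t) b) *
          Matrix.det (Matrix.of fun t b => N (j (a.succAbove t)) b) = 0 := by
  classical
  set g : Fin m → Fin (m + 1) → R := fun t => N (i t) with hg
  set v : Fin (m + 2) → Fin (m + 1) → R := fun a => N (j a) with hv
  set F : (Fin (m + 1) → R) → R := fun u => Matrix.det (Matrix.of (Fin.snoc g u)) with hF
  set c : Fin (m + 1) → R := fun k => F (Pi.single k 1) with hc
  set B : Matrix (Fin (m + 2)) (Fin (m + 2)) R :=
    Matrix.of (fun a => Fin.cons (F (v a)) (v a)) with hB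
  -- the base matrix used for multilinearity in the last row
  set M0 : Matrix (Fin (m + 1)) (Fin (m + 1)) R := Matrix.of (Fin.snoc g 0) with hM0
  have hupd : ∀ u : Fin (m + 1) → R,
      (Matrix.of (Fin.snoc g u) : Matrix (Fin (m + 1)) (Fin (m + 1)) R)
        = M0.updateRow (Fin.last m) u := by
    intro u
    ext t b
    refine Fin.lastCases ?_ (fun t' => ?_) t
    · simp [Matrix.updateRow_self]
    · rw [Matrix.updateRow_ne (Fin.castSucc_lt_last t').ne]
      simp [hM0]
  -- linearity of F
  have hFlin : ∀ u : Fin (m + 1) → R, F u = ∑ k, u k * c k := by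
    intro u
    have hu : u = ∑ k, u k • (Pi.single k 1 : Fin (m + 1) → R) := by
      ext b
      simp [Pi.single_apply, Finset.sum_ite_eq, mul_comm]
    have hFu : F u = Matrix.detRowAlternating (Function.update M0 (Fin.last m) u) := by
      rw [hF]
      show Matrix.det (Matrix.of (Fin.snoc g u)) = _
      rw [hupd u]
      rfl
    rw [hFu]
    conv_lhs => rw [hu]
    rw [show (Function.update M0 (Fin.last m) (∑ k, u k • (Pi.single k 1 : Fin (m + 1) → R)))
        = Function.update M0 (Fin.last m)
            (∑ k ∈ Finset.univ, u k • (Pi.single k 1 : Fin (m + 1) → R)) from rfl]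
    rw [(Matrix.detRowAlternating).map_update_sum Finset.univ (Fin.last m)
      (fun k => u k • (Pi.single k 1 : Fin (m + 1) → R)) M0]
    refine Finset.sum_congr rfl fun k _ => ?_
    rw [(Matrix.detRowAlternating).map_update_smul M0 (Fin.last m) (u k)
      (Pi.single k 1)]
    have : Matrix.detRowAlternating (Function.update M0 (Fin.last m) (Pi.single k 1)) = c k := by
      rw [hc, hF]
      show _ = Matrix.det (Matrix.of (Fin.snoc g (Pi.single k 1)))
      rw [hupd]
      rfl
    rw [this, smul_eq_mul]
  -- det B = 0 : column 0 is a combination of the other columns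
  have hcol : B.transpose 0 = ∑ k, c k • B.transpose k.succ := by
    ext a
    simp only [Matrix.transpose_apply, hB, Matrix.of_apply, Fin.cons_zero, Fin.cons_succ,
      Finset.sum_apply, Pi.smul_apply, smul_eq_mul]
    rw [hFlin (v a)]
    exact Finset.sum_congr rfl fun k _ => mul_comm _ _
  have hdetB : B.det = 0 := by
    rw [← Matrix.det_transpose]
    have h1 : B.transpose = B.transpose.updateRow 0 (∑ k, c k • B.transpose k.succ) := by
      rw [← hcol, Matrix.updateRow_eq_self]
    rw [h1]
    have h2 : (B.transpose.updateRow 0 (∑ k, c k • B.transpose k.succ)).det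
        = ∑ k, c k • (B.transpose.updateRow 0 (B.transpose k.succ)).det := by
      have := (Matrix.detRowAlternating).map_update_sum Finset.univ
        (0 : Fin (m + 2)) (fun k => c k • B.transpose k.succ) B.transpose
      rw [show (B.transpose.updateRow 0 (∑ k, c k • B.transpose k.succ))
          = Function.update B.transpose 0 (∑ k ∈ Finset.univ, c k • B.transpose k.succ) from rfl]
      show Matrix.detRowAlternating _ = _
      rw [this]
      refine Finset.sum_congr rfl fun k _ => ?_
      rw [(Matrix.detRowAlternating).map_update_smul B.transpose 0 (c k) (B.transpose k.succ)]
      rfl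
    rw [h2]
    refine Finset.sum_eq_zero fun k _ => ?_
    rw [Matrix.det_updateRow_eq_zero (Fin.succ_ne_zero k), smul_zero]
  -- cofactor expansion of det B along column 0
  have hexp := Matrix.det_succ_column_zero B
  rw [hdetB] at hexp
  -- identify the terms
  have hterm : ∀ a : Fin (m + 2),
      (-1 : R) ^ (a.1 + 1) *
          Matrix.det (Matrix.of fun t b => N ((Fin.snoc i (j a) : Fin (m + 1) → Fin n) t) b) *
          Matrix.det (Matrix.of fun t b => N (j (a.succAbove t)) b)
        = -((-1 : R) ^ (a.1) * B a 0 * (B.submatrix a.succAbove Fin.succ).det) := by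
    intro a
    have h1 : (Matrix.of fun t b => N ((Fin.snoc i (j a) : Fin (m + 1) → Fin n) t) b)
        = Matrix.of (Fin.snoc g (v a)) := by
      ext t b
      have : (fun t => N ((Fin.snoc i (j a) : Fin (m + 1) → Fin n) t)) = Fin.snoc g (v a) := by
        rw [hg, hv]
        have := Fin.comp_snoc (g := fun x : Fin n => N x) (q := i) (y := j a)
        simpa [Function.comp_def] using this
      simp [Matrix.of_apply, congrFun this t]
    have h2 : B a 0 = F (v a) := by simp [hB]
    have h3 : B.submatrix a.succAbove Fin.succ
        = (Matrix.of fun t b => N (j (a.succAbove t)) b) := by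
      ext t b
      simp [hB, Matrix.submatrix_apply, Fin.cons_succ, hv]
    rw [h1, h2, h3, hF, pow_succ]
    ring
  calc ∑ a : Fin (m + 2),
        (-1 : R) ^ (a.1 + 1) *
          Matrix.det (Matrix.of fun t b => N ((Fin.snoc i (j a) : Fin (m + 1) → Fin n) t) b) *
          Matrix.det (Matrix.of fun t b => N (j (a.succAbove t)) b)
      = ∑ a : Fin (m + 2),
          -((-1 : R) ^ (a.1) * B a 0 * (B.submatrix a.succAbove Fin.succ).det) :=
        Finset.sum_congr rfl fun a _ => hterm a
    _ = -(∑ a : Fin (m + 2),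
          (-1 : R) ^ (a.1) * B a 0 * (B.submatrix a.succAbove Fin.succ).det) := by
        rw [Finset.sum_neg_distrib]
    _ = 0 := by rw [← hexp, neg_zero]
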